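/- Let M be a countable structure in a finite relational language in which every atomic relation is mutually algebraic. Suppose there is an infinite set {C_i : i ∈ ω} of MA-connected components of M such that for each i, C_i properly embeds into C_{i+1}, but there is no embedding of C_{i+1} into C_i. Then there are 2^{ℵ₀} pairwise non-isomorphic countable structures bi-embeddable with M. -/

import Mathlib

/- STATEMENT 17: Let `M` be a countable structure in a finite relational language in which
every atomic relation is mutually algebraic.  If there are MA-connected components
`{C_i : i ∈ ω}` of `M` such that each `C_i` properly embeds into `C_{i+1}` but `C_{i+1}`
does not embed into `C_i`, then `M` has 2^ℵ₀ pairwise non-isomorphic countable siblings. -/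

open FirstOrder Language Set

universe u v w

namespace Stmt17

variable (L : FirstOrder.Language.{v, w})

/-- The induced structure on a subset of a structure in a relational language. -/
instance subsetStructure [L.IsRelational] {M : Type u} [L.Structure M] (s : Set M) :
    L.Structure s where
  funMap := fun f _ => isEmptyElim f
  RelMap := fun R v => Structure.RelMap R fun i => (v i : M)

/-- Every atomic relation of `M` defines a mutually algebraic set. -/
def AtomicallyMA (M : Type u) [L.Structure M] : Prop :=
  ∀ (n : ℕ) (R : L.Relations n), ∃ K : ℕ, ∀ m : M,
    Cardinal.mk {v : Fin n → M // Structure.RelMap R v ∧ ∃ i, v i = m} ≤ K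

/-- `x` and `y` lie on a common hyperedge of `G_M` whose vertices all lie in `A`. -/
def EdgeStep {M : Type u} [L.Structure M] (A : Set M) (x y : M) : Prop :=
  ∃ (n : ℕ) (R : L.Relations n) (v : Fin n → M),
    Structure.RelMap R v ∧ (∀ i, v i ∈ A) ∧ (∃ i, v i = x) ∧ (∃ i, v i = y)

/-- `A` is an MA-connected part: a connected part of the hypergraph `G_M`. -/
def IsMAConnectedPart {M : Type u} [L.Structure M] (A : Set M) : Prop :=
  ∀ x ∈ A, ∀ y ∈ A, Relation.ReflTransGen (EdgeStep L A) x y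

/-- An MA-connected component: a maximal MA-connected part. -/
def IsMAComponent {M : Type u} [L.Structure M] (A : Set M) : Prop :=
  A.Nonempty ∧ IsMAConnectedPart L A ∧
    ∀ B : Set M, IsMAConnectedPart L B → A ⊆ B → B = A

/-- There are 2^ℵ₀ pairwise non-isomorphic countable structures bi-embeddable with `N`. -/
def HasContinuumManySiblings (N : Type u) [L.Structure N] : Prop :=
  ∃ A : Set (L.Substructure N),
    Cardinal.continuum ≤ Cardinal.mk A ∧
    (∀ S ∈ A, Countable S ∧ Nonempty (N ↪[L] S)) ∧
    A.Pairwise fun S T => IsEmpty (S ≃[L] T)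

/-! ### Auxiliary lemmas -/

section Aux

variable [L.IsRelational] {M : Type u} [L.Structure M]

lemma edgeStep_mono {A B : Set M} (hAB : A ⊆ B) {x y : M} (h : EdgeStep L A x y) :
    EdgeStep L B x y := by
  obtain ⟨n, R, v, hR, hv, hx, hy⟩ := h
  exact ⟨n, R, v, hR, fun i => hAB (hv i), hx, hy⟩

lemma rtg_mono {A B : Set M} (hAB : A ⊆ B) {x y : M}
    (h : Relation.ReflTransGen (EdgeStep L A) x y) :
    Relation.ReflTransGen (EdgeStep L B) x y :=
  Relation.ReflTransGen.mono (fun _ _ hh => edgeStep_mono L hAB hh) _ _ h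

lemma singleton_part (m : M) : IsMAConnectedPart L ({m} : Set M) := by
  intro x hx y hy
  rw [Set.mem_singleton_iff] at hx hy
  subst hx; subst hy
  exact Relation.ReflTransGen.refl

/-- Every nonempty connected part extends to a component (Zorn). -/
lemma exists_component {D : Set M} (hne : D.Nonempty) (hD : IsMAConnectedPart L D) :
    ∃ A : Set M, IsMAComponent L A ∧ D ⊆ A := by
  obtain ⟨m, hsub, hmax⟩ := zorn_subset_nonempty {B : Set M | IsMAConnectedPart L B}
    (fun c hc hchain hcne => by
      refine ⟨⋃₀ c, ?_, fun s hs => Set.subset_sUnion_of_mem hs⟩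
      intro x hx y hy
      obtain ⟨s, hs, hxs⟩ := hx
      obtain ⟨t, ht, hyt⟩ := hy
      rcases hchain.total hs ht with hst | hts
      · exact rtg_mono L (Set.subset_sUnion_of_mem ht) (hc ht x (hst hxs) y hyt)
      · exact rtg_mono L (Set.subset_sUnion_of_mem hs) (hc hs x hxs y (hts hyt)))
    D hD
  refine ⟨m, ⟨hne.mono hsub, hmax.1, fun B hB hmB => ?_⟩, hsub⟩
  exact (hmax.2 hB hmB).antisymm hmB

lemma component_eq_of_inter {A B : Set M} (hA : IsMAComponent L A) (hB : IsMAComponent L B)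
    (hne : (A ∩ B).Nonempty) : A = B := by
  obtain ⟨x, hxA, hxB⟩ := hne
  have hconn : IsMAConnectedPart L (A ∪ B) := by
    have hstep : ∀ z ∈ A ∪ B, Relation.ReflTransGen (EdgeStep L (A ∪ B)) z x := by
      intro z hz
      rcases hz with hz | hz
      · exact rtg_mono L Set.subset_union_left (hA.2.1 z hz x hxA)
      · exact rtg_mono L Set.subset_union_right (hB.2.1 z hz x hxB)
    have hstep' : ∀ z ∈ A ∪ B, Relation.ReflTransGen (EdgeStep L (A ∪ B)) x z := by
      intro z hz
      rcases hz with hz | hz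
      · exact rtg_mono L Set.subset_union_left (hA.2.1 x hxA z hz)
      · exact rtg_mono L Set.subset_union_right (hB.2.1 x hxB z hz)
    intro a ha b hb
    exact (hstep a ha).trans (hstep' b hb)
  have h1 := hA.2.2 _ hconn Set.subset_union_left
  have h2 := hB.2.2 _ hconn Set.subset_union_right
  exact h1.symm.trans h2

/-- Any tuple realizing a relation lies entirely within a single component that meets it. -/
lemma tuple_mem_component {A : Set M} (hA : IsMAComponent L A) {n : ℕ} {R : L.Relations n}
    {v : Fin n → M} (hR : Structure.RelMap R v) {i₀ : Fin n} (hi₀ : v i₀ ∈ A) (j : Fin n) :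
    v j ∈ A := by
  have hconn : IsMAConnectedPart L (A ∪ Set.range v) := by
    have hedge : ∀ j k : Fin n,
        EdgeStep L (A ∪ Set.range v) (v j) (v k) := by
      intro j k
      exact ⟨n, R, v, hR, fun i => Or.inr ⟨i, rfl⟩, ⟨j, rfl⟩, ⟨k, rfl⟩⟩
    intro a ha b hb
    rcases ha with ha | ⟨ja, rfl⟩
    · rcases hb with hb | ⟨jb, rfl⟩
      · exact rtg_mono L Set.subset_union_left (hA.2.1 a ha b hb)
      · exact (rtg_mono L Set.subset_union_left (hA.2.1 a ha _ hi₀)).trans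
          (Relation.ReflTransGen.single (hedge i₀ jb))
    · rcases hb with hb | ⟨jb, rfl⟩
      · exact Relation.ReflTransGen.head (hedge ja i₀)
          (rtg_mono L Set.subset_union_left (hA.2.1 _ hi₀ b hb))
      · exact Relation.ReflTransGen.single (hedge ja jb)
  have := hA.2.2 _ hconn Set.subset_union_left
  rw [← this]
  exact Or.inr ⟨j, rfl⟩

/-- Images of connected parts under maps preserving relations on a superset are connected. -/
lemma image_connected {S : Set M} (F : M → M)
    (hF : ∀ (n : ℕ) (R : L.Relations n) (v : Fin n → M),
      (∀ i, v i ∈ S) → Structure.RelMap R v → Structure.RelMap R (F ∘ v))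
    {D : Set M} (hDS : D ⊆ S) (hD : IsMAConnectedPart L D) :
    IsMAConnectedPart L (F '' D) := by
  have key : ∀ a b : M, Relation.ReflTransGen (EdgeStep L D) a b →
      Relation.ReflTransGen (EdgeStep L (F '' D)) (F a) (F b) := by
    intro a b h
    induction h with
    | refl => exact Relation.ReflTransGen.refl
    | tail _ hstep ih =>
      obtain ⟨n, R, v, hR, hv, hx, hy⟩ := hstep
      refine ih.tail ⟨n, R, F ∘ v, hF n R v (fun i => hDS (hv i)) hR,
        fun i => ⟨v i, hv i, rfl⟩, ?_, ?_⟩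
      · obtain ⟨i, hi⟩ := hx; exact ⟨i, congrArg F hi⟩
      · obtain ⟨i, hi⟩ := hy; exact ⟨i, congrArg F hi⟩
  rintro x ⟨a, ha, rfl⟩ y ⟨b, hb, rfl⟩
  exact key a b (hD a ha b hb)

/-- Construct an embedding between induced structures on subsets from a map of the ambient
structure. -/
noncomputable def setEmb {A B : Set M} (f : M → M) (hmap : ∀ x ∈ A, f x ∈ B)
    (hinj : ∀ x ∈ A, ∀ y ∈ A, f x = f y → x = y)
    (hrel : ∀ (n : ℕ) (R : L.Relations n) (v : Fin n → M), (∀ i, v i ∈ A) →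
      (Structure.RelMap R (f ∘ v) ↔ Structure.RelMap R v)) :
    (A : Set M) ↪[L] (B : Set M) where
  toFun := fun x => ⟨f x, hmap x x.2⟩
  inj' := by
    intro x y hxy
    apply Subtype.ext
    exact hinj x x.2 y y.2 (congrArg Subtype.val hxy)
  map_fun' := fun {n} f _ => isEmptyElim f
  map_rel' := by
    intro n R v
    have := hrel n R (fun i => (v i : M)) (fun i => (v i).2)
    exact this

/-- Any subset of a structure in a relational language is a substructure. -/
def setSub (s : Set M) : L.Substructure M where
  carrier := s
  fun_mem := fun {_} f => isEmptyElim f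

@[simp] lemma mem_setSub {s : Set M} {x : M} : x ∈ setSub L s ↔ x ∈ s := Iff.rfl

/-- Bi-embeddability of induced structures on subsets. -/
def BiEmb (A B : Set M) : Prop :=
  Nonempty ((A : Set M) ↪[L] (B : Set M)) ∧ Nonempty ((B : Set M) ↪[L] (A : Set M))

lemma biEmb_refl (A : Set M) : BiEmb L A A :=
  ⟨⟨Embedding.refl L _⟩, ⟨Embedding.refl L _⟩⟩

/-- Build an embedding of the whole structure into (the substructure on) a subset. -/
noncomputable def fullEmb (s : Set M) (g : M → M) (hmap : ∀ x, g x ∈ s)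
    (hinj : Function.Injective g)
    (hrel : ∀ (n : ℕ) (R : L.Relations n) (v : Fin n → M),
      Structure.RelMap R (g ∘ v) ↔ Structure.RelMap R v) :
    M ↪[L] (setSub L s) where
  toFun := fun m => ⟨g m, hmap m⟩
  inj' := fun a b h => hinj (congrArg Subtype.val h)
  map_fun' := fun {n} f _ => isEmptyElim f
  map_rel' := fun {n} R v => hrel n R v

end Aux

/-- A strictly increasing (under embeddability) chain of MA-connected components yields
2^ℵ₀ siblings. -/
theorem increasing_components_continuum_siblings
    [L.IsRelational] [Finite (Σ n, L.Relations n)]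
    (M : Type u) [L.Structure M] [Countable M]
    (hma : AtomicallyMA L M)
    (C : ℕ → Set M) (hCinj : Function.Injective C)
    (hcomp : ∀ i, IsMAComponent L (C i))
    (hemb : ∀ i, ∃ f : (C i) ↪[L] (C (i + 1)), ¬ Function.Surjective (⇑f))
    (hnoemb : ∀ i, IsEmpty ((C (i + 1)) ↪[L] (C i))) :
    HasContinuumManySiblings L M := by
  classical
  -- chains of embeddings between components
  have hembN : ∀ a b : ℕ, a ≤ b → Nonempty ((C a : Set M) ↪[L] (C b : Set M)) := by
    intro a b hab
    induction b, hab using Nat.le_induction with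
    | base => exact ⟨Embedding.refl L _⟩
    | succ n hn ih =>
      obtain ⟨f⟩ := ih
      obtain ⟨g, -⟩ := hemb n
      exact ⟨g.comp f⟩
  have hbiC : ∀ a b : ℕ, BiEmb L (C a) (C b) → a = b := by
    intro a b hbi
    rcases Nat.lt_trichotomy a b with h | h | h
    · obtain ⟨g⟩ := hbi.2
      obtain ⟨f⟩ := hembN (a + 1) b h
      exact ((hnoemb a).false (g.comp f)).elim
    · exact h
    · obtain ⟨g⟩ := hbi.1
      obtain ⟨f⟩ := hembN (b + 1) a h
      exact ((hnoemb b).false (g.comp f)).elim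
  -- every point lies in a component
  have hcov : ∀ m : M, ∃ E : Set M, IsMAComponent L E ∧ m ∈ E := by
    intro m
    obtain ⟨A, hA, hsub⟩ := exists_component L (Set.singleton_nonempty m) (singleton_part L m)
    exact ⟨A, hA, hsub rfl⟩
  choose comp hcomp1 hcomp2 using hcov
  have comp_eq : ∀ (m : M) (E : Set M), IsMAComponent L E → m ∈ E → comp m = E :=
    fun m E hE hm => component_eq_of_inter L (hcomp1 m) hE ⟨m, hcomp2 m, hm⟩
  -- an injection of the components into ℕ
  obtain ⟨ι, hι⟩ : ∃ ι : {E : Set M // IsMAComponent L E} → ℕ, Function.Injective ι := by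
    obtain ⟨f0, hf0⟩ := exists_injective_nat M
    refine ⟨fun E => f0 E.2.1.choose, fun E E' h => ?_⟩
    have h1 := E.2.1.choose_spec
    have h2 := E'.2.1.choose_spec
    have := hf0 h
    exact Subtype.ext (component_eq_of_inter L E.2 E'.2 ⟨E.2.1.choose, h1, this ▸ h2⟩)
  -- the injective shift map on components
  obtain ⟨ψ, hψinj, hψemb, hψK⟩ :
      ∃ ψ : {E : Set M // IsMAComponent L E} → {E : Set M // IsMAComponent L E},
        Function.Injective ψ ∧
        (∀ E, Nonempty ((E.1 : Set M) ↪[L] ((ψ E).1 : Set M))) ∧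
        (∀ E i, ¬ BiEmb L (ψ E).1 (C (2 * i))) := by
    refine ⟨fun E => if h : ∃ k, BiEmb L E.1 (C k) then
        ⟨C (2 * Nat.pair (ι E) h.choose + 1), hcomp _⟩ else E, ?_, ?_, ?_⟩
    · intro E E' h
      dsimp only at h
      by_cases hE : ∃ k, BiEmb L E.1 (C k) <;> by_cases hE' : ∃ k, BiEmb L E'.1 (C k)
      · rw [dif_pos hE, dif_pos hE'] at h
        have hpair : Nat.pair (ι E) hE.choose = Nat.pair (ι E') hE'.choose := by
          have h2 := congrArg Subtype.val h
          simp only at h2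
          have := hCinj h2
          omega
        exact hι (Nat.pair_eq_pair.mp hpair).1
      · rw [dif_pos hE, dif_neg hE'] at h
        exfalso
        exact hE' ⟨2 * Nat.pair (ι E) hE.choose + 1, by rw [← h]; exact biEmb_refl L _⟩
      · rw [dif_neg hE, dif_pos hE'] at h
        exfalso
        exact hE ⟨2 * Nat.pair (ι E') hE'.choose + 1, by rw [h]; exact biEmb_refl L _⟩
      · rwa [dif_neg hE, dif_neg hE'] at h
    · intro E
      dsimp only
      by_cases hE : ∃ k, BiEmb L E.1 (C k)
      · beta_reduce
        rw [dif_pos hE]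
        obtain ⟨f⟩ := hE.choose_spec.1
        obtain ⟨g⟩ := hembN hE.choose (2 * Nat.pair (ι E) hE.choose + 1)
          (by have := Nat.right_le_pair (ι E) hE.choose; omega)
        exact ⟨g.comp f⟩
      · beta_reduce
        rw [dif_neg hE]
        exact ⟨Embedding.refl L _⟩
    · intro E i hbi
      dsimp only at hbi
      by_cases hE : ∃ k, BiEmb L E.1 (C k)
      · rw [dif_pos hE] at hbi
        have := hbiC _ _ hbi
        omega
      · rw [dif_neg hE] at hbi
        exact hE ⟨2 * i, hbi⟩
  -- the removed parts and the surviving sets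
  set K : ℕ → Set M := fun i =>
    {x | ∃ E : Set M, IsMAComponent L E ∧ BiEmb L E (C (2 * i)) ∧ x ∈ E} with hKdef
  set sY : Set ℕ → Set M := fun Y => {x | ∀ i ∈ Y, x ∉ K i} with hsYdef
  have hKC : ∀ i, C (2 * i) ⊆ K i := fun i x hx => ⟨C (2 * i), hcomp _, biEmb_refl L _, hx⟩
  have hKcompsub : ∀ (i : ℕ) (E : Set M), IsMAComponent L E → BiEmb L E (C (2 * i)) →
      E ⊆ K i := fun i E hE hbi x hx => ⟨E, hE, hbi, hx⟩
  have hKcomp : ∀ (i : ℕ) (E : Set M), IsMAComponent L E → (E ∩ K i).Nonempty →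
      BiEmb L E (C (2 * i)) := by
    rintro i E hE ⟨x, hxE, E', hE', hbi, hxE'⟩
    rwa [component_eq_of_inter L hE hE' ⟨x, hxE, hxE'⟩]
  have hCsub : ∀ (i : ℕ) (Y : Set ℕ), i ∉ Y → C (2 * i) ⊆ sY Y := by
    intro i Y hiY x hx j hjY hxK
    have hbi := hKcomp j (C (2 * i)) (hcomp _) ⟨x, hx, hxK⟩
    have := hbiC _ _ hbi
    have : i = j := by omega
    exact hiY (this ▸ hjY)
  have hCout : ∀ (i : ℕ) (Y : Set ℕ), i ∈ Y → ∀ x ∈ C (2 * i), x ∉ sY Y :=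
    fun i Y hi x hx hxs => hxs i hi (hKC i hx)
  -- the embedding of M into each surviving substructure
  have hg : ∀ Y : Set ℕ, Nonempty (M ↪[L] (setSub L (sY Y))) := by
    intro Y
    have eψ : ∀ E : {E : Set M // IsMAComponent L E},
        (E.1 : Set M) ↪[L] ((ψ E).1 : Set M) := fun E => (hψemb E).some
    obtain ⟨g, hgdef⟩ : ∃ g : M → M,
        ∀ m, g m = ((eψ ⟨comp m, hcomp1 m⟩) ⟨m, hcomp2 m⟩ : M) :=
      ⟨fun m => ((eψ ⟨comp m, hcomp1 m⟩) ⟨m, hcomp2 m⟩ : M), fun m => rfl⟩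
    have gcoe : ∀ (E : {E : Set M // IsMAComponent L E}) (m : M) (hm : m ∈ E.1),
        comp m = E.1 → g m = ((eψ E) ⟨m, hm⟩ : M) := by
      intro E m hm hEq
      have hE : (⟨comp m, hcomp1 m⟩ : {E : Set M // IsMAComponent L E}) = E :=
        Subtype.ext hEq
      rw [hgdef m]
      cases hE
      rfl
    have hgmem : ∀ m, g m ∈ (ψ ⟨comp m, hcomp1 m⟩).1 := by
      intro m
      rw [hgdef m]
      exact ((eψ ⟨comp m, hcomp1 m⟩) ⟨m, hcomp2 m⟩).2
    have hgs : ∀ m, g m ∈ sY Y := by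
      intro m j hjY hK
      exact hψK ⟨comp m, hcomp1 m⟩ j
        (hKcomp j _ (ψ ⟨comp m, hcomp1 m⟩).2 ⟨g m, hgmem m, hK⟩)
    have hcompg : ∀ m, comp (g m) = (ψ ⟨comp m, hcomp1 m⟩).1 :=
      fun m => comp_eq _ _ (ψ _).2 (hgmem m)
    have hcomp_eq_of : ∀ m m', g m = g m' → comp m = comp m' := by
      intro m m' h
      have hψeq : ψ ⟨comp m, hcomp1 m⟩ = ψ ⟨comp m', hcomp1 m'⟩ :=
        Subtype.ext (component_eq_of_inter L (ψ _).2 (ψ _).2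
          ⟨g m, hgmem m, h ▸ hgmem m'⟩)
      exact congrArg Subtype.val (hψinj hψeq)
    have hginj : Function.Injective g := by
      intro m m' h
      have hE := hcomp_eq_of m m' h
      have hm' : m' ∈ comp m := by rw [hE]; exact hcomp2 m'
      have e1 := gcoe ⟨comp m, hcomp1 m⟩ m (hcomp2 m) rfl
      have e2 := gcoe ⟨comp m, hcomp1 m⟩ m' hm' hE.symm
      have : ((eψ ⟨comp m, hcomp1 m⟩) ⟨m, hcomp2 m⟩ : M) =
          ((eψ ⟨comp m, hcomp1 m⟩) ⟨m', hm'⟩ : M) := by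
        rw [← e1, ← e2, h]
      have := (eψ ⟨comp m, hcomp1 m⟩).injective (Subtype.ext this)
      exact congrArg Subtype.val this
    have hgrel : ∀ (n : ℕ) (R : L.Relations n) (v : Fin n → M),
        Structure.RelMap R (g ∘ v) ↔ Structure.RelMap R v := by
      intro n R v
      match n, R, v with
      | 0, R, v =>
        have : g ∘ v = v := funext fun i => i.elim0
        rw [this]
      | (n + 1), R, v =>
        have main : ∀ (hvmem : ∀ j, v j ∈ comp (v 0))
            (hcall : ∀ j, comp (v j) = comp (v 0)),
            (Structure.RelMap R (g ∘ v) ↔ Structure.RelMap R v) := by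
          intro hvmem hcall
          have hEq : ∀ j, g (v j) =
              ((eψ ⟨comp (v 0), hcomp1 (v 0)⟩) ⟨v j, hvmem j⟩ : M) :=
            fun j => gcoe _ (v j) (hvmem j) (hcall j)
          have e : g ∘ v = fun j =>
              ((eψ ⟨comp (v 0), hcomp1 (v 0)⟩) ⟨v j, hvmem j⟩ : M) :=
            funext fun j => hEq j
          rw [e]
          exact (eψ ⟨comp (v 0), hcomp1 (v 0)⟩).map_rel' R (fun j => ⟨v j, hvmem j⟩)
        constructor
        · intro h
          have hall : ∀ j, g (v j) ∈ (ψ ⟨comp (v 0), hcomp1 (v 0)⟩).1 := by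
            intro j
            exact tuple_mem_component L (ψ _).2 h (i₀ := 0) (hgmem (v 0)) j
          have hcall : ∀ j, comp (v j) = comp (v 0) := by
            intro j
            have hψeq : ψ ⟨comp (v j), hcomp1 (v j)⟩ = ψ ⟨comp (v 0), hcomp1 (v 0)⟩ :=
              Subtype.ext (component_eq_of_inter L (ψ _).2 (ψ _).2
                ⟨g (v j), hgmem (v j), hall j⟩)
            exact congrArg Subtype.val (hψinj hψeq)
          have hvmem : ∀ j, v j ∈ comp (v 0) := fun j => hcall j ▸ hcomp2 (v j)
          exact (main hvmem hcall).mp h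
        · intro h
          have hvmem : ∀ j, v j ∈ comp (v 0) :=
            fun j => tuple_mem_component L (hcomp1 (v 0)) h (i₀ := 0) (hcomp2 (v 0)) j
          have hcall : ∀ j, comp (v j) = comp (v 0) :=
            fun j => comp_eq _ _ (hcomp1 (v 0)) (hvmem j)
          exact (main hvmem hcall).mpr h
    exact ⟨fullEmb L (sY Y) g hgs hginj hgrel⟩
  -- no isomorphism across differing index sets
  have hnoiso : ∀ (Y Y' : Set ℕ) (i : ℕ), i ∈ Y → i ∉ Y' →
      IsEmpty ((setSub L (sY Y')) ≃[L] (setSub L (sY Y))) := by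
    intro Y Y' i hiY hiY'
    constructor
    intro φ
    obtain ⟨F, hFdef⟩ : ∃ F : M → M, ∀ x (h : x ∈ sY Y'), F x = ↑(φ ⟨x, h⟩) :=
      ⟨fun x => if h : x ∈ sY Y' then ↑(φ ⟨x, h⟩) else x, fun x h => dif_pos h⟩
    obtain ⟨G, hGdef⟩ : ∃ G : M → M, ∀ x (h : x ∈ sY Y), G x = ↑(φ.symm ⟨x, h⟩) :=
      ⟨fun x => if h : x ∈ sY Y then ↑(φ.symm ⟨x, h⟩) else x, fun x h => dif_pos h⟩
    have hFS : ∀ x ∈ sY Y', F x ∈ sY Y := fun x h => by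
      rw [hFdef x h]; exact (φ ⟨x, h⟩).2
    have hGS : ∀ x ∈ sY Y, G x ∈ sY Y' := fun x h => by
      rw [hGdef x h]; exact (φ.symm ⟨x, h⟩).2
    have hGF : ∀ x (h : x ∈ sY Y'), G (F x) = x := by
      intro x h
      rw [hFdef x h, hGdef _ (φ ⟨x, h⟩).2]
      exact congrArg Subtype.val (φ.symm_apply_apply ⟨x, h⟩)
    have hFrel : ∀ (n : ℕ) (R : L.Relations n) (v : Fin n → M), (∀ j, v j ∈ sY Y') →
        (Structure.RelMap R (F ∘ v) ↔ Structure.RelMap R v) := by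
      intro n R v hv
      have e : F ∘ v = fun j => ↑(φ ⟨v j, hv j⟩) := funext fun j => hFdef _ _
      rw [e]
      exact φ.map_rel' R (fun j => ⟨v j, hv j⟩)
    have hGrel : ∀ (n : ℕ) (R : L.Relations n) (v : Fin n → M), (∀ j, v j ∈ sY Y) →
        (Structure.RelMap R (G ∘ v) ↔ Structure.RelMap R v) := by
      intro n R v hv
      have e : G ∘ v = fun j => ↑(φ.symm ⟨v j, hv j⟩) := funext fun j => hGdef _ _
      rw [e]
      exact φ.symm.map_rel' R (fun j => ⟨v j, hv j⟩)
    have hDsub : C (2 * i) ⊆ sY Y' := hCsub i Y' hiY'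
    have hFD : IsMAConnectedPart L (F '' C (2 * i)) :=
      image_connected L F (fun n R v hv h => (hFrel n R v hv).mpr h) hDsub
        (hcomp (2 * i)).2.1
    obtain ⟨d0, hd0⟩ := (hcomp (2 * i)).1
    have hFDne : (F '' C (2 * i)).Nonempty := ⟨F d0, ⟨d0, hd0, rfl⟩⟩
    obtain ⟨E, hE, hFDE⟩ := exists_component L hFDne hFD
    have hEsub : E ⊆ sY Y := by
      intro x hx j hjY hxK
      have hbi := hKcomp j E hE ⟨x, hx, hxK⟩
      have : F d0 ∈ K j := hKcompsub j E hE hbi (hFDE ⟨d0, hd0, rfl⟩)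
      exact hFS d0 (hDsub hd0) j hjY this
    have hGE : IsMAConnectedPart L (G '' E) :=
      image_connected L G (fun n R v hv h => (hGrel n R v hv).mpr h) hEsub hE.2.1
    have hDGE : C (2 * i) ⊆ G '' E := by
      intro a ha
      exact ⟨F a, hFDE ⟨a, ha, rfl⟩, hGF a (hDsub ha)⟩
    have hGEeq : G '' E = C (2 * i) := (hcomp (2 * i)).2.2 _ hGE hDGE
    have hFinj : ∀ x ∈ sY Y', ∀ y ∈ sY Y', F x = F y → x = y := by
      intro x hx y hy h
      rw [hFdef x hx, hFdef y hy] at h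
      have := φ.injective (Subtype.ext h)
      exact congrArg Subtype.val this
    have hGinj : ∀ x ∈ sY Y, ∀ y ∈ sY Y, G x = G y → x = y := by
      intro x hx y hy h
      rw [hGdef x hx, hGdef y hy] at h
      have := φ.symm.injective (Subtype.ext h)
      exact congrArg Subtype.val this
    have embDE : (C (2 * i) : Set M) ↪[L] (E : Set M) :=
      setEmb L F (fun x hx => hFDE ⟨x, hx, rfl⟩)
        (fun x hx y hy => hFinj x (hDsub hx) y (hDsub hy))
        (fun n R v hv => hFrel n R v (fun j => hDsub (hv j)))
    have embED : (E : Set M) ↪[L] (C (2 * i) : Set M) :=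
      setEmb L G (fun x hx => hGEeq ▸ (⟨x, hx, rfl⟩ : G x ∈ G '' E))
        (fun x hx y hy => hGinj x (hEsub hx) y (hEsub hy))
        (fun n R v hv => hGrel n R v (fun j => hEsub (hv j)))
    have hbi : BiEmb L E (C (2 * i)) := ⟨⟨embED⟩, ⟨embDE⟩⟩
    obtain ⟨e0, he0⟩ := hE.1
    exact hEsub he0 i hiY (hKcompsub i E hE hbi he0)
  -- distinctness of the substructures
  have hkey : ∀ (Y Y' : Set ℕ) (i : ℕ), i ∈ Y → i ∉ Y' → sY Y ≠ sY Y' := by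
    intro Y Y' i hi hi' hEq
    obtain ⟨m, hm⟩ := (hcomp (2 * i)).1
    have h1 : m ∈ sY Y' := hCsub i Y' hi' hm
    have h2 : m ∉ sY Y := hCout i Y hi m hm
    rw [hEq] at h2
    exact h2 h1
  have hSinj : Function.Injective (fun Y : Set ℕ => setSub L (sY Y)) := by
    intro Y Y' h
    have hs : sY Y = sY Y' := congrArg (fun S : L.Substructure M => (S : Set M)) h
    ext i
    constructor
    · intro hi
      by_contra hi'
      exact hkey Y Y' i hi hi' hs
    · intro hi
      by_contra hi'
      exact hkey Y' Y i hi hi' hs.symm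
  -- assemble
  refine ⟨Set.range (fun Y : Set ℕ => setSub L (sY Y)), ?_, ?_, ?_⟩
  · have h := Cardinal.mk_range_eq_of_injective hSinj
    rw [Cardinal.mk_set, Cardinal.mk_nat, Cardinal.two_power_aleph0] at h
    rw [← Cardinal.continuum_le_lift.{u, 0}, h, Cardinal.lift_continuum]
  · rintro S ⟨Y, rfl⟩
    exact ⟨inferInstance, hg Y⟩
  · rintro S ⟨Y, rfl⟩ T ⟨Y', rfl⟩ hne
    have hYne : Y ≠ Y' := fun h => hne (congrArg (fun Z : Set ℕ => setSub L (sY Z)) h)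
    have hdiff : ∃ i, (i ∈ Y ∧ i ∉ Y') ∨ (i ∈ Y' ∧ i ∉ Y) := by
      by_contra hc
      push_neg at hc
      apply hYne
      ext i
      have := hc i
      tauto
    obtain ⟨i, hi | hi⟩ := hdiff
    · exact ⟨fun φ => (hnoiso Y Y' i hi.1 hi.2).false φ.symm⟩
    · exact ⟨fun φ => (hnoiso Y' Y i hi.1 hi.2).false φ⟩

end Stmt17
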